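/- Let d ≥ 3 with d ≠ 4, fix ζ' ∈ ℝ^d with first coordinate ζ₁', and set ρ(ζ) = |ζ − ζ'|. Define G(ζ) = ( ζ₁·ζ₁' − ρ(ζ)²/(d−4) )·ρ(ζ)^{2−d}. Then for every ζ with ζ₁ ≠ 0 and ζ ≠ ζ': ζ₁·ΔG(ζ) = 2·∂G/∂ζ₁(ζ). Equivalently, G satisfies ∇·(ζ₁⁻² ∇G) = 0 away from the point ζ'. -/

import Mathlib

/-- First partial derivative in direction `i` of a scalar function on `ℝ^d`. -/
noncomputable def pd {d : ℕ} (i : Fin d) (f : EuclideanSpace ℝ (Fin d) → ℝ)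
    (ζ : EuclideanSpace ℝ (Fin d)) : ℝ :=
  fderiv ℝ f ζ (EuclideanSpace.single i 1)

/-- Laplacian `Δ = Σᵢ ∂²/∂ζᵢ²` of a scalar function on `ℝ^d`. -/
noncomputable def lap {d : ℕ} (f : EuclideanSpace ℝ (Fin d) → ℝ)
    (ζ : EuclideanSpace ℝ (Fin d)) : ℝ :=
  ∑ i : Fin d, pd i (pd i f) ζ

section Aux

variable {d : ℕ}

private lemma eval_single (w : Fin d → ℝ) (j : Fin d) :
    (∑ i, w i • (EuclideanSpace.proj i : EuclideanSpace ℝ (Fin d) →L[ℝ] ℝ))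
      (EuclideanSpace.single j 1) = w j := by
  classical
  simp [ContinuousLinearMap.sum_apply, EuclideanSpace.single_apply]

private lemma proj_single (i j : Fin d) :
    (EuclideanSpace.proj i : EuclideanSpace ℝ (Fin d) →L[ℝ] ℝ)
      (EuclideanSpace.single j 1) = if i = j then (1 : ℝ) else 0 := by
  classical
  simp [EuclideanSpace.single_apply]

private lemma hasFDerivAt_proj (i : Fin d) (η : EuclideanSpace ℝ (Fin d)) :
    HasFDerivAt (fun ν : EuclideanSpace ℝ (Fin d) => ν i)
      (EuclideanSpace.proj i : EuclideanSpace ℝ (Fin d) →L[ℝ] ℝ) η :=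
  (EuclideanSpace.proj (𝕜 := ℝ) i).hasFDerivAt (x := η)

private lemma hasFDerivAt_q (a ζ : EuclideanSpace ℝ (Fin d)) :
    HasFDerivAt (fun η : EuclideanSpace ℝ (Fin d) => ∑ i, (η i - a i) * (η i - a i))
      (∑ i, (2 * (ζ i - a i)) •
        (EuclideanSpace.proj i : EuclideanSpace ℝ (Fin d) →L[ℝ] ℝ)) ζ := by
  apply HasFDerivAt.fun_sum
  intro i _
  have h : HasFDerivAt (fun η : EuclideanSpace ℝ (Fin d) => η i - a i)
      (EuclideanSpace.proj i : EuclideanSpace ℝ (Fin d) →L[ℝ] ℝ) ζ :=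
    (hasFDerivAt_proj i ζ).sub_const (a i)
  have h2 := h.mul h
  rw [two_mul, add_smul]
  exact h2

end Aux

set_option maxHeartbeats 1000000 in
/-- The fundamental solution `G(ζ) = (ζ₁ζ₁' − ρ²/(d−4))·ρ^{2−d}` of the elliptic
operator `ℒ = ∇·(ζ₁⁻² ∇·)` satisfies `ζ₁·ΔG = 2·∂₁G` (equivalently
`∇·(ζ₁⁻² ∇G) = 0`) away from its singular point `ζ'` (for `d ≥ 3`, `d ≠ 4`). -/
theorem G_is_L_harmonic (d : ℕ) (hd : 3 ≤ d) (hd4 : d ≠ 4)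
    (ζ' : EuclideanSpace ℝ (Fin d))
    (G : EuclideanSpace ℝ (Fin d) → ℝ)
    (hG : ∀ η, G η =
      (η (⟨0, by omega⟩ : Fin d) * ζ' (⟨0, by omega⟩ : Fin d) -
          dist η ζ' ^ 2 / ((d : ℝ) - 4)) * dist η ζ' ^ ((2 : ℝ) - d)) :
    ∀ ζ : EuclideanSpace ℝ (Fin d),
      ζ (⟨0, by omega⟩ : Fin d) ≠ 0 → ζ ≠ ζ' →
        ζ (⟨0, by omega⟩ : Fin d) * lap G ζ =
          2 * pd (⟨0, by omega⟩ : Fin d) G ζ := by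
  classical
  intro ζ hζ0 hne
  set i0 : Fin d := ⟨0, by omega⟩ with hi0
  set c : ℝ := ζ' i0 with hc
  set m : ℝ := (d : ℝ) - 4 with hm
  set p : ℝ := ((2 : ℝ) - d) / 2 with hp
  have hm0 : m ≠ 0 := by
    have : (d : ℝ) ≠ 4 := by exact_mod_cast hd4
    simp [hm, sub_eq_zero, this]
  -- the squared distance function
  set q : EuclideanSpace ℝ (Fin d) → ℝ :=
    fun η => ∑ i, (η i - ζ' i) * (η i - ζ' i) with hqdef
  have hq0 : ∀ η, 0 ≤ q η := fun η => Finset.sum_nonneg fun i _ => mul_self_nonneg _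
  have hdist : ∀ η, dist η ζ' = Real.sqrt (q η) := by
    intro η
    rw [EuclideanSpace.dist_eq]
    congr 1
    refine Finset.sum_congr rfl fun i _ => ?_
    rw [Real.dist_eq, sq_abs, sq]
  have hqpos : 0 < q ζ := by
    rcases lt_or_eq_of_le (hq0 ζ) with h | h
    · exact h
    · exact absurd (dist_eq_zero.mp (by rw [hdist, ← h, Real.sqrt_zero])) hne
  have hqne : q ζ ≠ 0 := ne_of_gt hqpos
  -- rewrite G in terms of q
  have hGq : G = fun η => (η i0 * c - q η * m⁻¹) * q η ^ p := by
    funext η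
    rw [hG η]
    have h2 : dist η ζ' ^ 2 = q η := by rw [hdist]; exact Real.sq_sqrt (hq0 η)
    have hr : dist η ζ' ^ ((2 : ℝ) - d) = q η ^ p := by
      rw [hdist, Real.sqrt_eq_rpow, hp,
        show ((2 : ℝ) - d) / 2 = (1 / 2) * ((2 : ℝ) - d) by ring,
        Real.rpow_mul (hq0 η)]
    rw [h2, hr, div_eq_mul_inv]
  -- derivative of q
  set Dq : EuclideanSpace ℝ (Fin d) → (EuclideanSpace ℝ (Fin d) →L[ℝ] ℝ) :=
    fun η => ∑ i, (2 * (η i - ζ' i)) •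
      (EuclideanSpace.proj i : EuclideanSpace ℝ (Fin d) →L[ℝ] ℝ) with hDqdef
  have hDq : ∀ η, HasFDerivAt q (Dq η) η := fun η => hasFDerivAt_q ζ' η
  have hDqeval : ∀ η j, Dq η (EuclideanSpace.single j 1) = 2 * (η j - ζ' j) :=
    fun η j => eval_single _ j
  -- first derivative of G on the open set `q ≠ 0`
  have hder1 : ∀ η, q η ≠ 0 → HasFDerivAt G
      ((η i0 * c - q η * m⁻¹) • ((p * q η ^ (p - 1)) • Dq η)
        + (q η ^ p) • (c • (EuclideanSpace.proj i0 :
            EuclideanSpace ℝ (Fin d) →L[ℝ] ℝ) - m⁻¹ • Dq η)) η := by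
    intro η hη
    have h1 : HasFDerivAt (fun ν : EuclideanSpace ℝ (Fin d) => ν i0 * c - q ν * m⁻¹)
        (c • (EuclideanSpace.proj i0 : EuclideanSpace ℝ (Fin d) →L[ℝ] ℝ)
          - m⁻¹ • Dq η) η :=
      ((hasFDerivAt_proj i0 η).mul_const c).sub ((hDq η).mul_const m⁻¹)
    have h2 := (hDq η).rpow_const (p := p) (Or.inl hη)
    have := h1.mul h2
    rw [hGq]
    exact this
  set g1 : Fin d → EuclideanSpace ℝ (Fin d) → ℝ := fun j η =>
    (η i0 * c - q η * m⁻¹) * ((p * q η ^ (p - 1)) * (2 * (η j - ζ' j)))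
      + q η ^ p * (c * (if i0 = j then (1 : ℝ) else 0) - m⁻¹ * (2 * (η j - ζ' j)))
    with hg1def
  have hpd1 : ∀ j η, q η ≠ 0 → pd j G η = g1 j η := by
    intro j η hη
    rw [pd, (hder1 η hη).fderiv]
    simp only [ContinuousLinearMap.add_apply, ContinuousLinearMap.smul_apply,
      ContinuousLinearMap.sub_apply, hDqeval, proj_single, smul_eq_mul, hg1def]
  -- the set where q ≠ 0 is open
  have hqc : Continuous q := by
    apply continuous_finset_sum
    intro i _
    exact ((EuclideanSpace.proj (𝕜 := ℝ) i).continuous.sub continuous_const).mul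
      ((EuclideanSpace.proj (𝕜 := ℝ) i).continuous.sub continuous_const)
  have hUopen : IsOpen {η : EuclideanSpace ℝ (Fin d) | q η ≠ 0} :=
    (isOpen_ne (x := (0 : ℝ))).preimage hqc
  have hmemU : {η : EuclideanSpace ℝ (Fin d) | q η ≠ 0} ∈ nhds ζ :=
    hUopen.mem_nhds hqne
  -- second derivatives
  have hpd2 : ∀ j, pd j (pd j G) ζ =
      (ζ i0 * c - q ζ * m⁻¹) *
          ((p * q ζ ^ (p - 1)) * 2
            + (2 * (ζ j - ζ' j)) * (p * (((p - 1) * q ζ ^ (p - 1 - 1)) * (2 * (ζ j - ζ' j)))))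
        + (p * q ζ ^ (p - 1) * (2 * (ζ j - ζ' j))) *
            (c * (if i0 = j then (1 : ℝ) else 0) - m⁻¹ * (2 * (ζ j - ζ' j)))
        + ((q ζ ^ p) * (0 - m⁻¹ * 2)
            + (c * (if i0 = j then (1 : ℝ) else 0) - m⁻¹ * (2 * (ζ j - ζ' j))) *
                ((p * q ζ ^ (p - 1)) * (2 * (ζ j - ζ' j)))) := by
    intro j
    have hev : pd j G =ᶠ[nhds ζ] g1 j :=
      Filter.eventually_of_mem hmemU fun η hη => hpd1 j η hη
    rw [pd, hev.fderiv_eq]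
    -- derivative of `g1 j` at ζ
    have hs : HasFDerivAt (fun η : EuclideanSpace ℝ (Fin d) => 2 * (η j - ζ' j))
        ((2 : ℝ) • (EuclideanSpace.proj j : EuclideanSpace ℝ (Fin d) →L[ℝ] ℝ)) ζ :=
      ((hasFDerivAt_proj j ζ).sub_const (ζ' j)).const_mul 2
    have h1 : HasFDerivAt (fun ν : EuclideanSpace ℝ (Fin d) => ν i0 * c - q ν * m⁻¹)
        (c • (EuclideanSpace.proj i0 : EuclideanSpace ℝ (Fin d) →L[ℝ] ℝ)
          - m⁻¹ • Dq ζ) ζ :=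
      ((hasFDerivAt_proj i0 ζ).mul_const c).sub ((hDq ζ).mul_const m⁻¹)
    have hA : HasFDerivAt (fun η : EuclideanSpace ℝ (Fin d) => p * q η ^ (p - 1))
        (p • (((p - 1) * q ζ ^ (p - 1 - 1)) • Dq ζ)) ζ :=
      ((hDq ζ).rpow_const (p := p - 1) (Or.inl hqne)).const_mul p
    have hrp := (hDq ζ).rpow_const (p := p) (Or.inl hqne)
    have haff : HasFDerivAt (fun η : EuclideanSpace ℝ (Fin d) =>
        c * (if i0 = j then (1 : ℝ) else 0) - m⁻¹ * (2 * (η j - ζ' j)))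
        ((0 : EuclideanSpace ℝ (Fin d) →L[ℝ] ℝ)
          - m⁻¹ • ((2 : ℝ) • (EuclideanSpace.proj j :
              EuclideanSpace ℝ (Fin d) →L[ℝ] ℝ))) ζ :=
      (hasFDerivAt_const _ _).sub (hs.const_mul m⁻¹)
    have hD2 := (h1.mul (hA.mul hs)).add (hrp.mul haff)
    rw [hg1def]
    rw [HasFDerivAt.fderiv (f := fun η : EuclideanSpace ℝ (Fin d) => (η i0 * c - q η * m⁻¹) * (p * q η ^ (p - 1) * (2 * (η j - ζ' j))) + q η ^ p * (c * (if i0 = j then (1 : ℝ) else 0) - m⁻¹ * (2 * (η j - ζ' j)))) hD2]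
    simp only [ContinuousLinearMap.add_apply, ContinuousLinearMap.smul_apply,
      ContinuousLinearMap.sub_apply, ContinuousLinearMap.zero_apply, hDqeval,
      proj_single, smul_eq_mul, if_true, eq_self_iff_true, ↓reduceIte, Pi.mul_apply]
    ring
  -- sum up the second derivatives
  have hlap : lap G ζ =
      (d : ℝ) * ((ζ i0 * c - q ζ * m⁻¹) * (p * q ζ ^ (p - 1) * 2) + q ζ ^ p * (0 - m⁻¹ * 2))
        + (4 * c * p * q ζ ^ (p - 1)) * (ζ i0 - ζ' i0)
        + ((ζ i0 * c - q ζ * m⁻¹) * (4 * p * (p - 1) * q ζ ^ (p - 1 - 1))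
            - m⁻¹ * 8 * p * q ζ ^ (p - 1)) * q ζ := by
    rw [lap]
    rw [Finset.sum_congr rfl fun j _ => hpd2 j]
    have key : ∀ j : Fin d,
        (ζ i0 * c - q ζ * m⁻¹) *
            ((p * q ζ ^ (p - 1)) * 2
              + (2 * (ζ j - ζ' j)) * (p * (((p - 1) * q ζ ^ (p - 1 - 1)) * (2 * (ζ j - ζ' j)))))
          + (p * q ζ ^ (p - 1) * (2 * (ζ j - ζ' j))) *
              (c * (if i0 = j then (1 : ℝ) else 0) - m⁻¹ * (2 * (ζ j - ζ' j)))
          + ((q ζ ^ p) * (0 - m⁻¹ * 2)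
              + (c * (if i0 = j then (1 : ℝ) else 0) - m⁻¹ * (2 * (ζ j - ζ' j))) *
                  ((p * q ζ ^ (p - 1)) * (2 * (ζ j - ζ' j))))
        = ((ζ i0 * c - q ζ * m⁻¹) * (p * q ζ ^ (p - 1) * 2) + q ζ ^ p * (0 - m⁻¹ * 2))
          + (4 * c * p * q ζ ^ (p - 1)) * ((if i0 = j then (1 : ℝ) else 0) * (ζ j - ζ' j))
          + ((ζ i0 * c - q ζ * m⁻¹) * (4 * p * (p - 1) * q ζ ^ (p - 1 - 1))
              - m⁻¹ * 8 * p * q ζ ^ (p - 1)) * ((ζ j - ζ' j) * (ζ j - ζ' j)) := by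
      intro j; ring
    rw [Finset.sum_congr rfl fun j _ => key j]
    rw [Finset.sum_add_distrib, Finset.sum_add_distrib, Finset.sum_const,
      ← Finset.mul_sum, ← Finset.mul_sum]
    have e1 : ∑ j : Fin d, (if i0 = j then (1 : ℝ) else 0) * (ζ j - ζ' j)
        = ζ i0 - ζ' i0 := by
      simp [ite_mul]
    have e2 : ∑ j : Fin d, (ζ j - ζ' j) * (ζ j - ζ' j) = q ζ := rfl
    rw [e1, e2, Finset.card_univ, Fintype.card_fin, nsmul_eq_mul]
  -- final algebra
  have hq1 : q ζ ^ (p - 1) = q ζ ^ (p - 1 - 1) * q ζ := by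
    rw [← Real.rpow_add_one hqne (p - 1 - 1)]; ring_nf
  have hqp : q ζ ^ p = q ζ ^ (p - 1) * q ζ := by
    rw [← Real.rpow_add_one hqne (p - 1)]; ring_nf
  rw [hlap, hpd1 i0 ζ hqne, hg1def]
  simp only [if_pos rfl, ↓reduceIte]
  rw [hqp, hq1]
  rw [hp, hm, hc]
  have hm0' : (d : ℝ) - 4 ≠ 0 := hm0
  field_simp
  ring
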